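/- Let P be a compact hypercube in ℝ^m with Lebesgue volume V, and let K : P × P → [0,∞) be a kernel with bandwidth h > 0 satisfying: (a) ∫_P K(x,y) dy = 1 for every x ∈ P; (b) K(x,y) = 0 whenever ‖x−y‖ > h; (c) for every x ∈ P the map y ↦ K(x,y) is Lipschitz with constant L. Let ξ be a probability measure on P with a Lipschitz density ρ ≥ 0, let ν̂ be any probability measure on P, fix q ∈ (0,1), and set p½(x) = q/V + (1−q)·∫_P K(x,y) dν̂(y). Then for every γ ∈ (0,1), sup_{x∈P} ρ(x)/p½(x) ≤ 1/((1−q)γ) + (V/(q(1−γ))) · (L · W₁(ν̂, ξ) + h · ‖ρ‖_Lip). -/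

import Mathlib

open MeasureTheory

/-- Kantorovich–Rubinstein (Wasserstein-1) distance: infimum over couplings of
`∫ dist x y dπ`. -/
noncomputable def W1 {X : Type*} [MeasurableSpace X] [PseudoMetricSpace X]
    (μ ν : Measure X) : ℝ :=
  sInf {r : ℝ | ∃ π : Measure (X × X),
    π.map Prod.fst = μ ∧ π.map Prod.snd = ν ∧ r = ∫ p, dist p.1 p.2 ∂π}

lemma arith_aux (ρx A V q γ E : ℝ) (hρx : 0 ≤ ρx) (hA : 0 ≤ A)
    (hAlb : ρx - E ≤ A) (hE : 0 ≤ E) (hV : 0 < V)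
    (hq0 : 0 < q) (hq1 : q < 1) (hγ0 : 0 < γ) (hγ1 : γ < 1) :
    ρx / (q / V + (1 - q) * A) ≤ 1 / ((1 - q) * γ) + V / (q * (1 - γ)) * E := by
  have h1mq : 0 < 1 - q := by linarith
  have h1mγ : 0 < 1 - γ := by linarith
  have hqV : 0 < q / V := div_pos hq0 hV
  have hp12 : 0 < q / V + (1 - q) * A :=
    add_pos_of_pos_of_nonneg hqV (mul_nonneg h1mq.le hA)
  have hRHS2 : 0 ≤ V / (q * (1 - γ)) * E :=
    mul_nonneg (div_nonneg hV.le (mul_pos hq0 h1mγ).le) hE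
  have hRHS1 : 0 < 1 / ((1 - q) * γ) := one_div_pos.mpr (mul_pos h1mq hγ0)
  rcases le_or_gt (γ * ρx) A with hcase | hcase
  · have h1 : ρx / (q / V + (1 - q) * A) ≤ 1 / ((1 - q) * γ) := by
      rw [div_le_div_iff₀ hp12 (mul_pos h1mq hγ0)]
      nlinarith [mul_le_mul_of_nonneg_left hcase h1mq.le, hqV.le]
    linarith
  · have hρsmall : ρx * (1 - γ) ≤ E := by nlinarith
    have hρE : ρx ≤ E / (1 - γ) := (le_div_iff₀ h1mγ).mpr hρsmall
    have h1 : ρx / (q / V + (1 - q) * A) ≤ ρx / (q / V) := by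
      rw [div_eq_mul_one_div, div_eq_mul_one_div ρx (q / V)]
      exact mul_le_mul_of_nonneg_left
        (one_div_le_one_div_of_le hqV (by nlinarith [mul_nonneg h1mq.le hA])) hρx
    have h2 : ρx / (q / V) = ρx * (V / q) := by
      rw [div_div_eq_mul_div, mul_div_assoc]
    have h3 : ρx * (V / q) ≤ (E / (1 - γ)) * (V / q) :=
      mul_le_mul_of_nonneg_right hρE (div_nonneg hV.le hq0.le)
    have h4 : (E / (1 - γ)) * (V / q) = V / (q * (1 - γ)) * E := by
      field_simp
    linarith

/-- supremum bound for the likelihood ratio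
`ρ / (q/V + (1−q) p̃) ≤ 1/((1−q)γ) + (V/(q(1−γ)))·(L·W₁(ν̂,ξ) + h·‖ρ‖_Lip)`. -/
theorem stmt_5 {m : ℕ} (a b : Fin m → ℝ) (hab : ∀ i, a i ≤ b i)
    (P : Set (EuclideanSpace ℝ (Fin m)))
    (hP : P = {x : EuclideanSpace ℝ (Fin m) | ∀ i, a i ≤ x i ∧ x i ≤ b i})
    (V : ℝ) (hV : V = (volume P).toReal)
    (h : ℝ) (hh : 0 < h)
    (K : EuclideanSpace ℝ (Fin m) → EuclideanSpace ℝ (Fin m) → ℝ)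
    (hKnonneg : ∀ x ∈ P, ∀ y ∈ P, 0 ≤ K x y)
    (hKint : ∀ x ∈ P, ∫ y in P, K x y ∂volume = 1)
    (hKsupp : ∀ x ∈ P, ∀ y ∈ P, h < dist x y → K x y = 0)
    (L : NNReal) (hKLip : ∀ x ∈ P, LipschitzOnWith L (fun y => K x y) P)
    (ρ : EuclideanSpace ℝ (Fin m) → ℝ) (hρnonneg : ∀ x ∈ P, 0 ≤ ρ x)
    (Lρ : NNReal) (hρLip : LipschitzOnWith Lρ ρ P)
    (ξ : Measure (EuclideanSpace ℝ (Fin m))) [IsProbabilityMeasure ξ]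
    (hξ : ξ = (volume.restrict P).withDensity (fun x => ENNReal.ofReal (ρ x)))
    (νhat : Measure (EuclideanSpace ℝ (Fin m))) [IsProbabilityMeasure νhat]
    (hνhat : νhat Pᶜ = 0)
    (q : ℝ) (hq0 : 0 < q) (hq1 : q < 1)
    (γ : ℝ) (hγ0 : 0 < γ) (hγ1 : γ < 1) :
    ∀ x ∈ P, ρ x / (q / V + (1 - q) * ∫ y in P, K x y ∂νhat) ≤
      1 / ((1 - q) * γ) + (V / (q * (1 - γ))) * ((L : ℝ) * W1 νhat ξ + h * (Lρ : ℝ)) := by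

  -- compactness of P
  have hPcomp : IsCompact P := by
    have hPeq : P = (EuclideanSpace.equiv (Fin m) ℝ).toHomeomorph ⁻¹'
        (Set.univ.pi fun i => Set.Icc (a i) (b i)) := by
      rw [hP]; ext x
      simp [Set.mem_pi, Set.mem_Icc, Pi.le_def, forall_and, WithLp.equiv, Equiv.refl]
    rw [hPeq]
    exact (Homeomorph.isCompact_preimage _).mpr (isCompact_univ_pi fun i => isCompact_Icc)
  have hPmeas : MeasurableSet P := hPcomp.isClosed.measurableSet
  intro x hx
  have hVfin : volume P ≠ ⊤ := hPcomp.measure_lt_top.ne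
  haveI : IsFiniteMeasure (volume.restrict P) :=
    ⟨by rw [Measure.restrict_apply_univ]; exact hPcomp.measure_lt_top⟩
  -- ξ and νhat concentrated on P
  have hξP : ξ Pᶜ = 0 := by
    rw [hξ, withDensity_apply _ hPmeas.compl, Measure.restrict_restrict hPmeas.compl]
    simp
  have hνres : νhat.restrict P = νhat := by
    refine Measure.restrict_eq_self_of_ae_mem ?_
    rw [ae_iff]
    exact hνhat
  -- V > 0
  have hVolpos : volume P ≠ 0 := by
    intro h0
    have h1 : volume.restrict P = 0 := Measure.restrict_eq_zero.mpr h0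
    have h2 : ξ Set.univ = 0 := by rw [hξ, h1]; simp
    simp [measure_univ] at h2
  have hVpos : 0 < V := by rw [hV]; exact ENNReal.toReal_pos hVolpos hVfin
  -- global Lipschitz extension of K x
  obtain ⟨g, hgLip, hgEq⟩ := (hKLip x hx).extend_real
  obtain ⟨Cg, hCg⟩ := hPcomp.exists_bound_of_continuousOn hgLip.continuous.continuousOn
  obtain ⟨Cd, hCd⟩ := Metric.isBounded_iff.mp hPcomp.isBounded
  -- integrability of continuous functions on P
  have key : ∀ f : EuclideanSpace ℝ (Fin m) → ℝ, ContinuousOn f P → IntegrableOn f P volume := by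
    intro f hf
    obtain ⟨C, hC⟩ := hPcomp.exists_bound_of_continuousOn hf
    exact Integrable.mono' (integrable_const C) (hf.aestronglyMeasurable hPmeas)
      (by filter_upwards [ae_restrict_mem hPmeas] with y hy using hC y hy)
  -- basic rewrites
  have hA : ∫ y in P, K x y ∂νhat = ∫ y, g y ∂νhat := by
    rw [setIntegral_congr_fun hPmeas hgEq, hνres]
  have hg1 : ∫ y in P, g y ∂volume = 1 := by
    rw [← setIntegral_congr_fun hPmeas hgEq]; exact hKint x hx
  have hg0 : ∀ y ∈ P, 0 ≤ g y := fun y hy => (hgEq hy) ▸ hKnonneg x hx y hy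
  -- ∫ g dξ
  have hρaem : AEMeasurable (fun y => Real.toNNReal (ρ y)) (volume.restrict P) :=
    measurable_real_toNNReal.comp_aemeasurable
      (hρLip.continuousOn.aemeasurable hPmeas)
  have hgξ : ∫ y, g y ∂ξ = ∫ y in P, ρ y * g y ∂volume := by
    rw [hξ]
    have hd : (fun y => ENNReal.ofReal (ρ y))
        = fun y => ((Real.toNNReal (ρ y) : NNReal) : ENNReal) := rfl
    rw [hd, integral_withDensity_eq_integral_smul₀ hρaem g]
    refine setIntegral_congr_fun hPmeas fun y hy => ?_
    simp [NNReal.smul_def, Real.coe_toNNReal _ (hρnonneg y hy)]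
  -- lower bound on ∫ g dξ
  have hB1 : ρ x - h * (Lρ : ℝ) ≤ ∫ y, g y ∂ξ := by
    rw [hgξ]
    have e2 : ∀ y ∈ P, (ρ x - ρ y) * g y ≤ (h * (Lρ : ℝ)) * g y := by
      intro y hy
      rcases le_or_gt (dist x y) h with hd | hd
      · have h1 : ρ x - ρ y ≤ (Lρ : ℝ) * dist x y := by
          have := hρLip.dist_le_mul x hx y hy
          rw [Real.dist_eq] at this
          have := abs_le.mp this
          linarith [this.2]
        have h2 : (Lρ : ℝ) * dist x y ≤ h * (Lρ : ℝ) := by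
          have := Lρ.coe_nonneg; nlinarith
        exact mul_le_mul_of_nonneg_right (by linarith) (hg0 y hy)
      · have : g y = 0 := (hgEq hy) ▸ hKsupp x hx y hy hd
        simp [this]
    have hint1 : IntegrableOn (fun y => (ρ x - ρ y) * g y) P volume :=
      key _ (((continuousOn_const.sub hρLip.continuousOn).mul hgLip.continuous.continuousOn))
    have hint2 : IntegrableOn (fun y => (h * (Lρ : ℝ)) * g y) P volume :=
      key _ (continuousOn_const.mul hgLip.continuous.continuousOn)
    have hmono := setIntegral_mono_on hint1 hint2 hPmeas e2
    have hgint : IntegrableOn g P volume := key _ hgLip.continuous.continuousOn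
    have hρgint : IntegrableOn (fun y => ρ y * g y) P volume :=
      key _ (hρLip.continuousOn.mul hgLip.continuous.continuousOn)
    have hsplit : ∫ y in P, (ρ x - ρ y) * g y ∂volume
        = ρ x * ∫ y in P, g y ∂volume - ∫ y in P, ρ y * g y ∂volume := by
      rw [← integral_const_mul, ← integral_sub (hgint.const_mul _) hρgint]
      congr 1 with y; ring
    rw [hsplit, integral_const_mul, hg1] at hmono
    linarith
  -- coupling bound: ∫ g dξ − ∫ g dν̂ ≤ L · W1
  set S : Set ℝ := {r : ℝ | ∃ π : Measure (EuclideanSpace ℝ (Fin m) × EuclideanSpace ℝ (Fin m)),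
    π.map Prod.fst = νhat ∧ π.map Prod.snd = ξ ∧ r = ∫ p, dist p.1 p.2 ∂π} with hS
  have hW1 : W1 νhat ξ = sInf S := rfl
  have hSmem : ∀ r ∈ S, (∫ y, g y ∂ξ) - (∫ y, g y ∂νhat) ≤ (L : ℝ) * r ∧ 0 ≤ r := by
    rintro r ⟨π, hπ1, hπ2, rfl⟩
    have hπuniv : π Set.univ = 1 := by
      have := congrArg (fun μ : Measure (EuclideanSpace ℝ (Fin m)) => μ Set.univ) hπ1
      simp only [Measure.map_apply measurable_fst MeasurableSet.univ] at this
      simpa [measure_univ] using this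
    haveI : IsProbabilityMeasure π := ⟨hπuniv⟩
    have hae : ∀ᵐ p ∂π, p.1 ∈ P ∧ p.2 ∈ P := by
      have h1 : π (Prod.fst ⁻¹' Pᶜ) = 0 := by
        rw [← Measure.map_apply measurable_fst hPmeas.compl, hπ1]; exact hνhat
      have h2 : π (Prod.snd ⁻¹' Pᶜ) = 0 := by
        rw [← Measure.map_apply measurable_snd hPmeas.compl, hπ2]; exact hξP
      rw [ae_iff]
      refine measure_mono_null (fun p hp => ?_) (measure_union_null h1 h2)
      simp only [Set.mem_setOf_eq, not_and_or] at hp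
      rcases hp with hp | hp
      · exact Or.inl hp
      · exact Or.inr hp
    have hint1 : Integrable (fun p : EuclideanSpace ℝ (Fin m) × EuclideanSpace ℝ (Fin m) => g p.1) π :=
      Integrable.mono' (integrable_const Cg)
        ((hgLip.continuous.comp continuous_fst).aestronglyMeasurable)
        (by filter_upwards [hae] with p hp using hCg _ hp.1)
    have hint2 : Integrable (fun p : EuclideanSpace ℝ (Fin m) × EuclideanSpace ℝ (Fin m) => g p.2) π :=
      Integrable.mono' (integrable_const Cg)
        ((hgLip.continuous.comp continuous_snd).aestronglyMeasurable)
        (by filter_upwards [hae] with p hp using hCg _ hp.2)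
    have hintd : Integrable (fun p : EuclideanSpace ℝ (Fin m) × EuclideanSpace ℝ (Fin m) => dist p.1 p.2) π :=
      Integrable.mono' (integrable_const Cd)
        ((continuous_fst.dist continuous_snd).aestronglyMeasurable)
        (by filter_upwards [hae] with p hp
            rw [Real.norm_of_nonneg dist_nonneg]
            exact hCd hp.1 hp.2)
    have hm1 : ∫ y, g y ∂νhat = ∫ p, g p.1 ∂π := by
      rw [← hπ1, integral_map measurable_fst.aemeasurable hgLip.continuous.aestronglyMeasurable]
    have hm2 : ∫ y, g y ∂ξ = ∫ p, g p.2 ∂π := by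
      rw [← hπ2, integral_map measurable_snd.aemeasurable hgLip.continuous.aestronglyMeasurable]
    constructor
    · rw [hm1, hm2, ← integral_sub hint2 hint1]
      calc ∫ p, (g p.2 - g p.1) ∂π ≤ ∫ p, (L : ℝ) * dist p.1 p.2 ∂π := by
            refine integral_mono (hint2.sub hint1) (hintd.const_mul _) fun p => ?_
            have := hgLip.dist_le_mul p.2 p.1
            rw [Real.dist_eq] at this
            have h2 := (abs_le.mp this).2
            calc g p.2 - g p.1 ≤ (L : ℝ) * dist p.2 p.1 := by linarith
              _ = (L : ℝ) * dist p.1 p.2 := by rw [dist_comm]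
        _ = (L : ℝ) * ∫ p, dist p.1 p.2 ∂π := integral_const_mul _ _
    · exact integral_nonneg fun p => dist_nonneg
  have hSne : S.Nonempty := by
    refine ⟨∫ p, dist p.1 p.2 ∂(νhat.prod ξ), νhat.prod ξ, ?_, ?_, rfl⟩
    · rw [Measure.map_fst_prod]; simp [measure_univ]
    · rw [Measure.map_snd_prod]; simp [measure_univ]
  have hW1nonneg : 0 ≤ W1 νhat ξ := by
    rw [hW1]; exact Real.sInf_nonneg fun r hr => (hSmem r hr).2
  have hB2 : (∫ y, g y ∂ξ) - (∫ y, g y ∂νhat) ≤ (L : ℝ) * W1 νhat ξ := by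
    rcases eq_or_lt_of_le L.coe_nonneg with hL | hL
    · obtain ⟨r, hr⟩ := hSne
      have := (hSmem r hr).1
      rw [← hL] at this ⊢
      simpa using this
    · rw [hW1]
      have hle : ((∫ y, g y ∂ξ) - (∫ y, g y ∂νhat)) / (L : ℝ) ≤ sInf S := by
        refine le_csInf hSne fun r hr => ?_
        rw [div_le_iff₀ hL]
        calc (∫ y, g y ∂ξ) - (∫ y, g y ∂νhat) ≤ (L : ℝ) * r := (hSmem r hr).1
          _ = r * (L : ℝ) := mul_comm _ _
      calc (∫ y, g y ∂ξ) - (∫ y, g y ∂νhat)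
          = (((∫ y, g y ∂ξ) - (∫ y, g y ∂νhat)) / (L : ℝ)) * (L : ℝ) := by
            field_simp
        _ ≤ sInf S * (L : ℝ) := mul_le_mul_of_nonneg_right hle hL.le
        _ = (L : ℝ) * sInf S := mul_comm _ _
  -- assemble
  have hAlb : ρ x - ((L : ℝ) * W1 νhat ξ + h * (Lρ : ℝ)) ≤ ∫ y in P, K x y ∂νhat := by
    rw [hA]; linarith [hB1, hB2]
  have hAnonneg : 0 ≤ ∫ y in P, K x y ∂νhat :=
    setIntegral_nonneg hPmeas fun y hy => hKnonneg x hx y hy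
  have hEnonneg : 0 ≤ (L : ℝ) * W1 νhat ξ + h * (Lρ : ℝ) := by
    have h1 := mul_nonneg L.coe_nonneg hW1nonneg
    have h2 := mul_nonneg hh.le Lρ.coe_nonneg
    linarith
  exact arith_aux (ρ x) _ V q γ _ (hρnonneg x hx) hAnonneg hAlb hEnonneg hVpos hq0 hq1 hγ0 hγ1
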